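/- Let P be a level-regular graded poset with all levels P^{(i)} = {p ∈ P : ρ(p) = i} finite, and let A ⊆ P be an antichain with A^{(i)} = A ∩ P^{(i)}. Then the LYM number L_A = ∑_{i=0}^∞ #A^{(i)} / #P^{(i)} satisfies L_A ≤ 1. -/

import Mathlib

open scoped ENNReal

theorem lym_level_regular_graded
    {P : Type*} [PartialOrder P] (ρ : P → ℕ)
    (hmin : ∀ p : P, (∀ q, ¬ q < p) → ρ p = 0)
    (hcov : ∀ a b : P, a ⋖ b → ρ b = ρ a + 1)
    (hmono : ∀ a b : P, a < b → ρ a < ρ b)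
    (hfin : ∀ i, {p : P | ρ p = i}.Finite)
    (hup : ∀ i, ∃ u, ∀ p, ρ p = i → {q : P | p ⋖ q}.ncard = u)
    (hdown : ∀ i, ∃ d, ∀ q, ρ q = i + 1 → {p : P | p ⋖ q}.ncard = d)
    (A : Set P) (hA : IsAntichain (· ≤ ·) A) :
    ∑' i : ℕ, ({p : P | p ∈ A ∧ ρ p = i}.ncard : ℝ≥0∞) / ({p : P | ρ p = i}.ncard : ℝ≥0∞) ≤ 1 := by
  classical
  -- levels as finsets
  set lvl : ℕ → Finset P := fun i => (hfin i).toFinset with hlvl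
  have hmemlvl : ∀ i p, p ∈ lvl i ↔ ρ p = i := by
    intro i p; simp [hlvl, Set.Finite.mem_toFinset]
  set pc : ℕ → ℕ := fun i => {p : P | ρ p = i}.ncard with hpc
  set ac : ℕ → ℕ := fun i => {p : P | p ∈ A ∧ ρ p = i}.ncard with hac
  have hpccard : ∀ i, pc i = (lvl i).card := by
    intro i; simp [hpc, hlvl, Set.ncard_eq_toFinset_card _ (hfin i)]
  have haccard : ∀ i, ac i = ((lvl i).filter (· ∈ A)).card := by
    intro i
    have hfinA : {p : P | p ∈ A ∧ ρ p = i}.Finite := (hfin i).subset (fun p hp => hp.2)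
    rw [hac]
    simp only
    rw [Set.ncard_eq_toFinset_card _ hfinA]
    congr 1
    ext p
    simp [Set.Finite.mem_toFinset, hmemlvl, and_comm]
  -- every element of positive rank has a lower cover
  have hlower : ∀ q : P, ρ q ≠ 0 → ∃ p, p ⋖ q := by
    intro q hq
    have hSfin : {p : P | p < q}.Finite := by
      apply Set.Finite.subset (Set.Finite.biUnion (Set.finite_Iio (ρ q))
        (fun j _ => hfin j))
      intro p hp
      exact Set.mem_biUnion (hmono p q hp) rfl
    have hSne : {p : P | p < q}.Nonempty := by
      rcases Set.eq_empty_or_nonempty {p : P | p < q} with h | h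
      · rw [Set.eq_empty_iff_forall_notMem] at h
        exact absurd (hmin q (fun r hr => h r hr)) hq
      · exact h
    obtain ⟨m, hm, hmax⟩ : ∃ m ∈ {p : P | p < q}, ∀ c ∈ {p : P | p < q}, id m ≤ id c → id m = id c := by
      obtain ⟨m, hm, hmax⟩ := Set.Finite.exists_maximalFor id _ hSfin hSne
      exact ⟨m, hm, fun c hc hmc => le_antisymm hmc (hmax hc hmc)⟩
    refine ⟨m, hm, fun c hc hcq => ?_⟩
    have := hmax c hcq (le_of_lt hc)
    simp only [id] at this
    exact absurd this (ne_of_lt hc)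
  -- level i is nonempty if level (i+1) is
  have hne_down : ∀ i, (lvl (i + 1)).Nonempty → (lvl i).Nonempty := by
    intro i hq'
    obtain ⟨q, hq⟩ := hq'
    rw [hmemlvl] at hq
    obtain ⟨p, hpq⟩ := hlower q (by omega)
    exact ⟨p, by rw [hmemlvl]; have := hcov p q hpq; omega⟩
  -- the key normalized matching inequality
  have key : ∀ i (B : Finset P), (∀ q ∈ B, ρ q = i + 1) →
      (B.card : ℝ≥0∞) / pc (i + 1) ≤
        (((lvl i).filter (fun p => ∃ q ∈ B, p ⋖ q)).card : ℝ≥0∞) / pc i := by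
    intro i B hB
    obtain ⟨u, hu⟩ := hup i
    obtain ⟨d, hd⟩ := hdown i
    have hBsub : B ⊆ lvl (i + 1) := fun q hq => (hmemlvl _ q).2 (hB q hq)
    have hdowncard : ∀ q : P, ρ q = i + 1 → ((lvl i).filter (· ⋖ q)).card = d := by
      intro q hq
      rw [← hd q hq]
      have he : {p : P | p ⋖ q} = ((lvl i).filter (· ⋖ q) : Finset P) := by
        ext p
        simp only [Set.mem_setOf_eq, Finset.coe_filter, Finset.mem_filter, hmemlvl]
        constructor
        · intro h; exact ⟨by have := hcov p q h; omega, h⟩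
        · exact fun h => h.2
      rw [he, Set.ncard_coe_finset]
    have hupcard : ∀ p : P, ρ p = i → ((lvl (i + 1)).filter (p ⋖ ·)).card = u := by
      intro p hp
      rw [← hu p hp]
      have he : {q : P | p ⋖ q} = ((lvl (i + 1)).filter (p ⋖ ·) : Finset P) := by
        ext q
        simp only [Set.mem_setOf_eq, Finset.coe_filter, Finset.mem_filter, hmemlvl]
        constructor
        · intro h; exact ⟨by have := hcov p q h; omega, h⟩
        · exact fun h => h.2
      rw [he, Set.ncard_coe_finset]
    -- double counting of cover edges
    have count : ∀ C : Finset P,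
        ∑ q ∈ C, ((lvl i).filter (· ⋖ q)).card = ∑ p ∈ lvl i, (C.filter (p ⋖ ·)).card := by
      intro C
      simp_rw [Finset.card_filter]
      exact Finset.sum_comm
    -- level edge count
    have hlevelcount : (lvl (i + 1)).card * d = (lvl i).card * u := by
      have h0 := count (lvl (i + 1))
      rw [Finset.sum_congr rfl (fun q hq => hdowncard q ((hmemlvl _ q).1 hq)),
        Finset.sum_congr rfl (fun p hp => hupcard p ((hmemlvl _ p).1 hp))] at h0
      simpa [mul_comm] using h0
    set S : Finset P := (lvl i).filter (fun p => ∃ q ∈ B, p ⋖ q) with hS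
    -- |B| * d ≤ |S| * u
    have hcount2 : B.card * d ≤ S.card * u := by
      have h1 := count B
      rw [Finset.sum_congr rfl (fun q hq => hdowncard q (hB q hq))] at h1
      have h2 : ∑ p ∈ lvl i, (B.filter (p ⋖ ·)).card = ∑ p ∈ S, (B.filter (p ⋖ ·)).card := by
        symm
        apply Finset.sum_subset (Finset.filter_subset _ _)
        intro p hp hpS
        rw [Finset.mem_filter] at hpS
        push_neg at hpS
        rw [Finset.card_eq_zero, Finset.filter_eq_empty_iff]
        intro q hq
        exact hpS hp q hq
      have h3 : ∑ p ∈ S, (B.filter (p ⋖ ·)).card ≤ S.card * u := by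
        have h3' := Finset.sum_le_card_nsmul S (fun p => (B.filter (p ⋖ ·)).card) u
          (fun p hp => by
            have hpi : ρ p = i := (hmemlvl _ p).1 (Finset.mem_filter.1 hp).1
            calc (B.filter (p ⋖ ·)).card
                ≤ ((lvl (i + 1)).filter (p ⋖ ·)).card :=
                  Finset.card_le_card (Finset.filter_subset_filter _ hBsub)
              _ = u := hupcard p hpi)
        simpa using h3'
      calc B.card * d = ∑ _q ∈ B, d := by rw [Finset.sum_const, smul_eq_mul]
        _ = ∑ p ∈ lvl i, (B.filter (p ⋖ ·)).card := h1
        _ = ∑ p ∈ S, (B.filter (p ⋖ ·)).card := h2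
        _ ≤ S.card * u := h3
    -- nat cross-multiplied inequality
    have hnat : B.card * (lvl i).card ≤ S.card * (lvl (i + 1)).card := by
      rcases Nat.eq_zero_or_pos d with hd0 | hd0
      · -- then level i+1 is empty, so B is empty
        have hempty : lvl (i + 1) = ∅ := by
          by_contra hne
          obtain ⟨q, hq⟩ := Finset.nonempty_of_ne_empty hne
          rw [hmemlvl] at hq
          obtain ⟨p, hpq⟩ := hlower q (by omega)
          have hfin' : {p : P | p ⋖ q}.Finite := by
            apply (hfin i).subset
            intro r hr
            have := hcov r q hr
            simp only [Set.mem_setOf_eq]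
            omega
          have hpos : 0 < {p : P | p ⋖ q}.ncard := (Set.ncard_pos hfin').2 ⟨p, hpq⟩
          rw [hd q hq] at hpos
          omega
        have hB0 : B = ∅ := Finset.subset_empty.1 (hempty ▸ hBsub)
        simp [hB0]
      · have h4 : B.card * (lvl i).card * d ≤ S.card * (lvl (i + 1)).card * d := by
          calc B.card * (lvl i).card * d = B.card * d * (lvl i).card := by ring
            _ ≤ S.card * u * (lvl i).card := Nat.mul_le_mul_right _ hcount2
            _ = S.card * ((lvl i).card * u) := by ring
            _ = S.card * ((lvl (i + 1)).card * d) := by rw [← hlevelcount]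
            _ = S.card * (lvl (i + 1)).card * d := by ring
        exact Nat.le_of_mul_le_mul_right h4 hd0
    -- convert to ℝ≥0∞
    by_cases hq0 : pc (i + 1) = 0
    · have hB0 : B = ∅ := by
        have h5 : lvl (i + 1) = ∅ := by
          rw [← Finset.card_eq_zero, ← hpccard]; exact hq0
        exact Finset.subset_empty.1 (h5 ▸ hBsub)
      simp [hB0]
    · have hp0 : pc i ≠ 0 := by
        intro h
        have hne : (lvl (i + 1)).Nonempty := by
          rw [hpccard] at hq0
          exact Finset.card_pos.1 (Nat.pos_of_ne_zero hq0)
        have := Finset.card_pos.2 (hne_down i hne)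
        rw [hpccard] at h
        omega
      rw [ENNReal.div_le_iff (by exact_mod_cast hq0) (ENNReal.natCast_ne_top _)]
      have h6 : (S.card : ℝ≥0∞) / pc i * pc (i + 1) = S.card * pc (i + 1) / pc i := by
        rw [div_eq_mul_inv, div_eq_mul_inv, mul_right_comm]
      rw [h6, ENNReal.le_div_iff_mul_le (Or.inl (by exact_mod_cast hp0))
          (Or.inl (ENNReal.natCast_ne_top _))]
      rw [hpccard, hpccard]
      exact_mod_cast hnat
  -- main downward induction: finite partial sums are bounded by |B|/pc at the bottom
  have main : ∀ n k i, i + k = n → ∃ B : Finset P, (∀ p ∈ B, ρ p = i) ∧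
      (∀ p ∈ B, ∃ a ∈ A, p ≤ a) ∧
      ∑ j ∈ Finset.Icc i n, (ac j : ℝ≥0∞) / pc j ≤ (B.card : ℝ≥0∞) / pc i := by
    intro n k
    induction k with
    | zero =>
      intro i hi
      subst hi
      simp only [Nat.add_zero]
      refine ⟨(lvl i).filter (· ∈ A), fun p hp => (hmemlvl _ p).1 (Finset.mem_filter.1 hp).1,
        fun p hp => ⟨p, (Finset.mem_filter.1 hp).2, le_refl p⟩, ?_⟩
      rw [Finset.Icc_self, Finset.sum_singleton, haccard]
    | succ k ih =>
      intro i hi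
      obtain ⟨B', hB'lvl, hB'le, hB'sum⟩ := ih (i + 1) (by omega)
      set S : Finset P := (lvl i).filter (fun p => ∃ q ∈ B', p ⋖ q) with hS
      refine ⟨(lvl i).filter (· ∈ A) ∪ S, ?_, ?_, ?_⟩
      · intro p hp
        rcases Finset.mem_union.1 hp with h | h
        · exact (hmemlvl _ p).1 (Finset.mem_filter.1 h).1
        · exact (hmemlvl _ p).1 (Finset.mem_filter.1 h).1
      · intro p hp
        rcases Finset.mem_union.1 hp with h | h
        · exact ⟨p, (Finset.mem_filter.1 h).2, le_refl p⟩
        · obtain ⟨q, hqB', hpq⟩ := (Finset.mem_filter.1 h).2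
          obtain ⟨a, haA, hqa⟩ := hB'le q hqB'
          exact ⟨a, haA, le_of_lt (lt_of_lt_of_le hpq.1 hqa)⟩
      · have hdisj : Disjoint ((lvl i).filter (· ∈ A)) S := by
          rw [Finset.disjoint_left]
          intro p hp hpS
          have hpA : p ∈ A := (Finset.mem_filter.1 hp).2
          obtain ⟨q, hqB', hpq⟩ := (Finset.mem_filter.1 hpS).2
          obtain ⟨a, haA, hqa⟩ := hB'le q hqB'
          have hpa : p < a := lt_of_lt_of_le hpq.1 hqa
          exact hA hpA haA (ne_of_lt hpa) (le_of_lt hpa)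
        have hcard : (((lvl i).filter (· ∈ A)) ∪ S).card = ac i + S.card := by
          rw [Finset.card_union_of_disjoint hdisj, haccard]
        have hsplit : Finset.Icc i n = insert i (Finset.Icc (i + 1) n) := by
          ext x
          simp only [Finset.mem_Icc, Finset.mem_insert]
          omega
        rw [hsplit, Finset.sum_insert (by simp)]
        calc (ac i : ℝ≥0∞) / pc i + ∑ j ∈ Finset.Icc (i + 1) n, (ac j : ℝ≥0∞) / pc j
            ≤ (ac i : ℝ≥0∞) / pc i + (B'.card : ℝ≥0∞) / pc (i + 1) :=
              add_le_add_right hB'sum _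
          _ ≤ (ac i : ℝ≥0∞) / pc i + (S.card : ℝ≥0∞) / pc i :=
              add_le_add_right (key i B' hB'lvl) _
          _ = ((ac i + S.card : ℕ) : ℝ≥0∞) / pc i := by
              rw [ENNReal.div_add_div_same, Nat.cast_add]
          _ = _ := by rw [hcard]
  -- finite partial sums are at most 1
  have partial_le : ∀ n : ℕ, ∑ i ∈ Finset.range (n + 1), (ac i : ℝ≥0∞) / pc i ≤ 1 := by
    intro n
    obtain ⟨B, hBlvl, _, hBsum⟩ := main n n 0 (by omega)
    have hr : Finset.range (n + 1) = Finset.Icc 0 n := by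
      ext x; simp only [Finset.mem_range, Finset.mem_Icc]; omega
    rw [hr]
    refine hBsum.trans ?_
    have hBsub : B ⊆ lvl 0 := fun p hp => (hmemlvl 0 p).2 (hBlvl p hp)
    by_cases h0 : pc 0 = 0
    · have hB0 : B = ∅ := by
        have h5 : lvl 0 = ∅ := by rw [← Finset.card_eq_zero, ← hpccard]; exact h0
        exact Finset.subset_empty.1 (h5 ▸ hBsub)
      simp [hB0]
    · rw [ENNReal.div_le_iff (by exact_mod_cast h0) (ENNReal.natCast_ne_top _), one_mul]
      rw [hpccard]
      exact_mod_cast Finset.card_le_card hBsub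
  -- conclude
  have hterm : ∀ i : ℕ,
      ({p : P | p ∈ A ∧ ρ p = i}.ncard : ℝ≥0∞) / ({p : P | ρ p = i}.ncard : ℝ≥0∞)
        = (ac i : ℝ≥0∞) / pc i := fun i => rfl
  rw [tsum_congr hterm, ENNReal.tsum_eq_iSup_sum]
  refine iSup_le fun s => ?_
  have hsub : s ⊆ Finset.range (s.sup id + 1) := fun i hi => by
    have := Finset.le_sup (f := id) hi
    simp only [id] at this
    exact Finset.mem_range.2 (by omega)
  exact (Finset.sum_le_sum_of_subset hsub).trans (partial_le _)
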